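/- Let σ > 0, let ν be a probability measure on ℝ, let q : ℝ → ℝ be a bounded nonnegative measurable confidence weight (e.g., the neighbor's Gaussian density), and let F : ℝ × ℝ → ℝ be bounded and measurable. Define the rectified expectation Ẽ(θ) = ∫∫ F(x, y) · q(y) d(gaussianReal θ σ²)(x) dν(y). Then Ẽ is differentiable at every θ, and Ẽ'(θ) = ∫∫ ((x − θ)/σ²) · F(x, y) · q(y) d(gaussianReal θ σ²)(x) dν(y). (This is the rescaled-gradient identity ∇_{θ_i} E_{θ_i'}[F_i(θ_i')] = E_{θ_i'}[∇_{θ_i} log p(θ_i') · F_i(ς_i') · ∏_{c∈N_i} p(θ_c')] of the natural co-evolutionary strategy.) -/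

import Mathlib

open MeasureTheory ProbabilityTheory Real
open scoped NNReal ENNReal

/-- Integral against a Gaussian measure as a Lebesgue integral with the density. -/
lemma integral_gaussianReal_pdf {v : ℝ≥0} (hv : v ≠ 0) (m : ℝ) (g : ℝ → ℝ) :
    ∫ x, g x ∂(gaussianReal m v) = ∫ x, gaussianPDFReal m v x * g x := by
  rw [gaussianReal_of_var_ne_zero _ hv]
  have h : gaussianPDF m v
      = fun x => ((Real.toNNReal (gaussianPDFReal m v x) : ℝ≥0) : ℝ≥0∞) := rfl
  rw [h, integral_withDensity_eq_integral_smul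
      ((measurable_gaussianPDFReal m v).real_toNNReal)]
  refine integral_congr_ae (Filter.Eventually.of_forall fun x => ?_)
  simp [NNReal.smul_def, Real.coe_toNNReal _ (gaussianPDFReal_nonneg m v x)]

/-- Derivative of the Gaussian density with respect to the mean. -/
lemma hasDerivAt_gaussianPDFReal_mean (v : ℝ≥0) (hv : v ≠ 0) (x t : ℝ) :
    HasDerivAt (fun m => gaussianPDFReal m v x)
      (((x - t) / v) * gaussianPDFReal t v x) t := by
  have hv' : (0:ℝ) < v := by positivity
  have h0 : HasDerivAt (fun m : ℝ => x - m) (-1) t := (hasDerivAt_id t).const_sub x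
  have h1 : HasDerivAt (fun m : ℝ => -(x - m) ^ 2 / (2 * (v : ℝ))) ((x - t) / v) t := by
    have h2 := (h0.pow 2).neg.div_const (2 * (v : ℝ))
    refine h2.congr_deriv ?_
    field_simp
    ring
  have h3 := h1.exp
  have h4 := h3.const_mul ((Real.sqrt (2 * π * v))⁻¹)
  unfold gaussianPDFReal
  refine h4.congr_deriv ?_
  ring

lemma abs_mul_exp_le_sqrt (v : ℝ) (hv : 0 < v) (s : ℝ) :
    |s| * rexp (-s ^ 2 / (2 * v)) ≤ Real.sqrt (2 * v) * rexp (-s ^ 2 / (4 * v)) := by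
  have hw2 : Real.sqrt (2 * v) ^ 2 = 2 * v := Real.sq_sqrt (by linarith)
  have hwpos : 0 < Real.sqrt (2 * v) := Real.sqrt_pos.mpr (by linarith)
  have key : |s| ≤ Real.sqrt (2 * v) * rexp (s ^ 2 / (4 * v)) := by
    have he : 1 + s ^ 2 / (4 * v) ≤ rexp (s ^ 2 / (4 * v)) := by
      have := Real.add_one_le_exp (s ^ 2 / (4 * v)); linarith
    have h1 : |s| ≤ Real.sqrt (2 * v) * (1 + s ^ 2 / (4 * v)) := by
      rw [← sub_nonneg]
      have hrw : Real.sqrt (2 * v) * (1 + s ^ 2 / (4 * v)) - |s|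
          = (4 * v * Real.sqrt (2 * v) + Real.sqrt (2 * v) * s ^ 2 - 4 * v * |s|) / (4 * v) := by
        field_simp
      rw [hrw]
      apply div_nonneg _ (by positivity)
      nlinarith [mul_nonneg hwpos.le (sq_nonneg (Real.sqrt (2 * v) - |s|)), sq_abs s,
        abs_nonneg s]
    exact h1.trans (mul_le_mul_of_nonneg_left he hwpos.le)
  calc |s| * rexp (-s ^ 2 / (2 * v))
      ≤ (Real.sqrt (2 * v) * rexp (s ^ 2 / (4 * v))) * rexp (-s ^ 2 / (2 * v)) :=
        mul_le_mul_of_nonneg_right key (Real.exp_pos _).le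
    _ = Real.sqrt (2 * v) * rexp (-s ^ 2 / (4 * v)) := by
        rw [mul_assoc, ← Real.exp_add]
        congr 2
        field_simp
        ring

lemma exp_shift_le (v : ℝ) (hv : 0 < v) (a d : ℝ) (hd : |d| ≤ 1) :
    rexp (-(a - d) ^ 2 / (4 * v)) ≤ rexp (1 / (2 * v)) * rexp (-a ^ 2 / (8 * v)) := by
  rw [← Real.exp_add, Real.exp_le_exp]
  have hd2 : d ^ 2 ≤ 1 := by nlinarith [abs_nonneg d, sq_abs d]
  have had : a * d ≤ |a| := by
    calc a * d ≤ |a * d| := le_abs_self _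
      _ = |a| * |d| := abs_mul a d
      _ ≤ |a| * 1 := by nlinarith [abs_nonneg a]
      _ = |a| := mul_one _
  have key : a ^ 2 - 2 * (a - d) ^ 2 ≤ 4 := by
    nlinarith [sq_nonneg (|a| - 2), sq_abs a, sq_nonneg d]
  rw [div_add_div _ _ (by positivity : (2 * v : ℝ) ≠ 0) (by positivity : (8 * v : ℝ) ≠ 0),
    div_le_div_iff₀ (by positivity) (by positivity)]
  nlinarith [mul_le_mul_of_nonneg_left key (by positivity : (0:ℝ) ≤ 8 * v ^ 2)]

open Metric in
/-- Rescaled-gradient identity of the natural co-evolutionary strategy: with a bounded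
nonnegative measurable confidence weight `q` on the neighbor's sample, the rectified
expectation `Ẽ(θ) = ∫∫ F(x, y) · q(y) d(gaussianReal θ σ²)(x) dν(y)` is differentiable at
every `θ` with `Ẽ'(θ) = ∫∫ ((x − θ)/σ²) · F(x, y) · q(y) d(gaussianReal θ σ²)(x) dν(y)`. -/
theorem rectified_expectation_hasDerivAt_score
    (σ : ℝ) (hσ : 0 < σ) (ν : Measure ℝ) [IsProbabilityMeasure ν]
    (q : ℝ → ℝ) (hq_meas : Measurable q) (hq_nonneg : ∀ y, 0 ≤ q y)
    (hq_bdd : ∃ Cq : ℝ, ∀ y, |q y| ≤ Cq)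
    (F : ℝ × ℝ → ℝ) (hF_meas : Measurable F) (hF_bdd : ∃ C : ℝ, ∀ p, |F p| ≤ C) (θ : ℝ) :
    HasDerivAt
      (fun t : ℝ => ∫ y, ∫ x, F (x, y) * q y ∂(gaussianReal t (Real.toNNReal (σ ^ 2))) ∂ν)
      (∫ y, ∫ x, ((x - θ) / σ ^ 2) * F (x, y) * q y
        ∂(gaussianReal θ (Real.toNNReal (σ ^ 2))) ∂ν) θ := by
  obtain ⟨C, hC⟩ := hF_bdd
  obtain ⟨Cq, hCq⟩ := hq_bdd
  have hC0 : 0 ≤ C := (abs_nonneg _).trans (hC (0, 0))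
  have hCq0 : 0 ≤ Cq := (abs_nonneg _).trans (hCq 0)
  set v : ℝ≥0 := Real.toNNReal (σ ^ 2) with hv_def
  have hvσ : (v : ℝ) = σ ^ 2 := Real.coe_toNNReal _ (sq_nonneg σ)
  have hvpos : 0 < (v : ℝ) := by rw [hvσ]; positivity
  have hvne : v ≠ 0 := by
    intro h
    rw [h] at hvpos
    simp at hvpos
  set P : Measure (ℝ × ℝ) := ν.prod (volume : Measure ℝ) with hP
  -- the parametrized integrand and its derivative
  set Φ : ℝ → ℝ × ℝ → ℝ :=
    fun t z => gaussianPDFReal t v z.2 * (F (z.2, z.1) * q z.1) with hΦ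
  set Φ' : ℝ → ℝ × ℝ → ℝ :=
    fun t z => (((z.2 - t) / v) * gaussianPDFReal t v z.2) * (F (z.2, z.1) * q z.1) with hΦ'
  have hmeasΦ : ∀ t, Measurable (Φ t) := by
    intro t
    simp only [hΦ]
    exact ((measurable_gaussianPDFReal t v).comp measurable_snd).mul
      (((hF_meas.comp measurable_swap)).mul (hq_meas.comp measurable_fst))
  have hmeasΦ' : ∀ t, Measurable (Φ' t) := by
    intro t
    simp only [hΦ']
    exact ((((measurable_snd.sub measurable_const).div_const _)).mul
      ((measurable_gaussianPDFReal t v).comp measurable_snd)).mul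
      (((hF_meas.comp measurable_swap)).mul (hq_meas.comp measurable_fst))
  have hFq_bdd : ∀ z : ℝ × ℝ, |F (z.2, z.1) * q z.1| ≤ C * Cq := by
    intro z
    rw [abs_mul]
    exact mul_le_mul (hC _) (hCq _) (abs_nonneg _) hC0
  -- integrability of Φ t for every t
  have hintΦ : ∀ t, Integrable (Φ t) P := by
    intro t
    refine Integrable.mono'
      (g := fun z : ℝ × ℝ => (C * Cq) * gaussianPDFReal t v z.2) ?_ ?_ ?_
    · exact (integrable_const (C * Cq)).mul_prod (integrable_gaussianPDFReal t v)
    · exact (hmeasΦ t).aestronglyMeasurable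
    · refine Filter.Eventually.of_forall fun z => ?_
      have h1 : 0 ≤ gaussianPDFReal t v z.2 := gaussianPDFReal_nonneg _ _ _
      calc ‖Φ t z‖ = gaussianPDFReal t v z.2 * |F (z.2, z.1) * q z.1| := by
            simp only [hΦ, Real.norm_eq_abs, abs_mul, abs_of_nonneg h1]
        _ ≤ gaussianPDFReal t v z.2 * (C * Cq) :=
            mul_le_mul_of_nonneg_left (hFq_bdd z) h1
        _ = (C * Cq) * gaussianPDFReal t v z.2 := by ring
  -- rewriting the double integral as an integral over the product measure
  have hrw : ∀ t, (∫ y, ∫ x, F (x, y) * q y ∂(gaussianReal t v) ∂ν) = ∫ z, Φ t z ∂P := by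
    intro t
    have h1 : ∀ y, (∫ x, F (x, y) * q y ∂(gaussianReal t v))
        = ∫ x, gaussianPDFReal t v x * (F (x, y) * q y) :=
      fun y => integral_gaussianReal_pdf hvne t _
    simp_rw [h1]
    have h2 := hintΦ t
    simp only [hΦ] at h2
    simp only [hP] at h2
    exact (integral_prod _ h2).symm
  -- dominating function for the derivative
  set Kc : ℝ := (C * Cq) * (((Real.sqrt (2 * π * v))⁻¹ / v) * Real.sqrt (2 * v)
    * rexp (1 / (2 * v))) with hKc
  set bound : ℝ × ℝ → ℝ := fun z => Kc * rexp (-(z.2 - θ) ^ 2 / (8 * v)) with hbound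
  have hbound_int : Integrable bound P := by
    have h1 : Integrable (fun x : ℝ => rexp (-(1 / (8 * (v : ℝ))) * x ^ 2)) volume :=
      integrable_exp_neg_mul_sq (by positivity)
    have h2 : Integrable (fun x : ℝ => rexp (-(1 / (8 * (v : ℝ))) * (x - θ) ^ 2)) volume :=
      h1.comp_sub_right θ
    have h3 : Integrable (fun x : ℝ => rexp (-(x - θ) ^ 2 / (8 * (v : ℝ)))) volume := by
      have : (fun x : ℝ => rexp (-(x - θ) ^ 2 / (8 * (v : ℝ))))
          = fun x : ℝ => rexp (-(1 / (8 * (v : ℝ))) * (x - θ) ^ 2) := by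
        funext x
        congr 1
        field_simp
      rw [this]
      exact h2
    simp only [hbound, hP]
    exact (integrable_const Kc).mul_prod h3
  -- pointwise bound on the derivative for t in the unit ball around θ
  have hband : ∀ z : ℝ × ℝ, ∀ t ∈ ball θ 1, ‖Φ' t z‖ ≤ bound z := by
    intro z t ht
    have hdist : |t - θ| ≤ 1 := le_of_lt (by simpa [Real.dist_eq] using ht)
    have hc0 : (0:ℝ) ≤ (Real.sqrt (2 * π * (v:ℝ)))⁻¹ := by positivity
    have hpdf : gaussianPDFReal t v z.2
        = (Real.sqrt (2 * π * (v:ℝ)))⁻¹ * rexp (-(z.2 - t) ^ 2 / (2 * (v:ℝ))) := rfl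
    have h1 : ‖Φ' t z‖ ≤ ((|z.2 - t| / v) *
        ((Real.sqrt (2 * π * (v:ℝ)))⁻¹ * rexp (-(z.2 - t) ^ 2 / (2 * (v:ℝ))))) * (C * Cq) := by
      have e : ‖Φ' t z‖ = |((z.2 - t) / (v:ℝ)) * gaussianPDFReal t v z.2|
          * |F (z.2, z.1) * q z.1| := by
        simp only [hΦ', Real.norm_eq_abs]
        rw [abs_mul]
      rw [e]
      have e2 : |((z.2 - t) / (v:ℝ)) * gaussianPDFReal t v z.2|
          = (|z.2 - t| / v) *
            ((Real.sqrt (2 * π * (v:ℝ)))⁻¹ * rexp (-(z.2 - t) ^ 2 / (2 * (v:ℝ)))) := by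
        rw [abs_mul, abs_div, abs_of_nonneg hvpos.le,
          abs_of_nonneg (gaussianPDFReal_nonneg t v z.2), hpdf]
      rw [e2]
      exact mul_le_mul le_rfl (hFq_bdd z) (abs_nonneg _) (by positivity)
    have h2 : (|z.2 - t| / v) *
        ((Real.sqrt (2 * π * (v:ℝ)))⁻¹ * rexp (-(z.2 - t) ^ 2 / (2 * (v:ℝ))))
        ≤ ((Real.sqrt (2 * π * (v:ℝ)))⁻¹ / v) *
          (Real.sqrt (2 * (v:ℝ)) * rexp (-(z.2 - t) ^ 2 / (4 * (v:ℝ)))) := by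
      have h := abs_mul_exp_le_sqrt (v:ℝ) hvpos (z.2 - t)
      calc (|z.2 - t| / v) *
            ((Real.sqrt (2 * π * (v:ℝ)))⁻¹ * rexp (-(z.2 - t) ^ 2 / (2 * (v:ℝ))))
          = ((Real.sqrt (2 * π * (v:ℝ)))⁻¹ / v) *
            (|z.2 - t| * rexp (-(z.2 - t) ^ 2 / (2 * (v:ℝ)))) := by ring
        _ ≤ ((Real.sqrt (2 * π * (v:ℝ)))⁻¹ / v) *
            (Real.sqrt (2 * (v:ℝ)) * rexp (-(z.2 - t) ^ 2 / (4 * (v:ℝ)))) :=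
            mul_le_mul_of_nonneg_left h (by positivity)
    have h3 : rexp (-(z.2 - t) ^ 2 / (4 * (v:ℝ)))
        ≤ rexp (1 / (2 * (v:ℝ))) * rexp (-(z.2 - θ) ^ 2 / (8 * (v:ℝ))) := by
      have heq : z.2 - t = (z.2 - θ) - (t - θ) := by ring
      rw [heq]
      exact exp_shift_le (v:ℝ) hvpos (z.2 - θ) (t - θ) hdist
    calc ‖Φ' t z‖
        ≤ ((|z.2 - t| / v) * ((Real.sqrt (2 * π * (v:ℝ)))⁻¹ *
            rexp (-(z.2 - t) ^ 2 / (2 * (v:ℝ))))) * (C * Cq) := h1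
      _ ≤ (((Real.sqrt (2 * π * (v:ℝ)))⁻¹ / v) * (Real.sqrt (2 * (v:ℝ)) *
            rexp (-(z.2 - t) ^ 2 / (4 * (v:ℝ))))) * (C * Cq) :=
          mul_le_mul_of_nonneg_right h2 (by positivity)
      _ ≤ (((Real.sqrt (2 * π * (v:ℝ)))⁻¹ / v) * (Real.sqrt (2 * (v:ℝ)) *
            (rexp (1 / (2 * (v:ℝ))) * rexp (-(z.2 - θ) ^ 2 / (8 * (v:ℝ)))))) * (C * Cq) :=
          mul_le_mul_of_nonneg_right (mul_le_mul_of_nonneg_left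
            (mul_le_mul_of_nonneg_left h3 (by positivity)) (by positivity)) (by positivity)
      _ = bound z := by simp only [hbound, hKc]; ring
  -- differentiability in t
  have hdiff : ∀ z : ℝ × ℝ, ∀ t ∈ ball θ 1, HasDerivAt (fun t => Φ t z) (Φ' t z) t := by
    intro z t _
    simp only [hΦ, hΦ']
    exact (hasDerivAt_gaussianPDFReal_mean v hvne z.2 t).mul_const _
  -- apply differentiation under the integral sign
  have main := hasDerivAt_integral_of_dominated_loc_of_deriv_le
    (μ := P) (F := Φ) (F' := Φ') (x₀ := θ) (bound := bound) (ball_mem_nhds θ one_pos)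
    (Filter.Eventually.of_forall fun t => (hmeasΦ t).aestronglyMeasurable)
    (hintΦ θ) ((hmeasΦ' θ).aestronglyMeasurable)
    (Filter.Eventually.of_forall fun z => hband z)
    hbound_int
    (Filter.Eventually.of_forall fun z => hdiff z)
  obtain ⟨hintΦ', hderiv⟩ := main
  -- rewrite the conclusion
  have hrw' : (∫ y, ∫ x, ((x - θ) / σ ^ 2) * F (x, y) * q y ∂(gaussianReal θ v) ∂ν)
      = ∫ z, Φ' θ z ∂P := by
    have h1 : ∀ y, (∫ x, ((x - θ) / σ ^ 2) * F (x, y) * q y ∂(gaussianReal θ v))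
        = ∫ x, gaussianPDFReal θ v x * (((x - θ) / σ ^ 2) * F (x, y) * q y) :=
      fun y => integral_gaussianReal_pdf hvne θ _
    simp_rw [h1]
    have h2 : Integrable (fun z : ℝ × ℝ =>
        gaussianPDFReal θ v z.2 * (((z.2 - θ) / σ ^ 2) * F (z.2, z.1) * q z.1)) P := by
      have heq : (fun z : ℝ × ℝ =>
          gaussianPDFReal θ v z.2 * (((z.2 - θ) / σ ^ 2) * F (z.2, z.1) * q z.1)) = Φ' θ := by
        funext z
        simp only [hΦ']
        rw [hvσ]
        ring
      rw [heq]
      exact hintΦ'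
    simp only [hP] at h2
    rw [show P = ν.prod (volume : Measure ℝ) from hP]
    rw [(integral_prod _ h2).symm]
    rw [← hP]
    refine integral_congr_ae (Filter.Eventually.of_forall fun z => ?_)
    simp only [hΦ']
    rw [hvσ]
    ring
  rw [hrw']
  have hfun : (fun t : ℝ => ∫ y, ∫ x, F (x, y) * q y ∂(gaussianReal t v) ∂ν)
      = fun t => ∫ z, Φ t z ∂P := funext hrw
  rw [hfun]
  exact hderiv
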